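/- Every uniformly controlled gate LU(χ) = ∑_c |c⟩⟨c| ⊗ U(χ_c) with targets in an Abelian divisible group satisfies the frequency-domain factorization: LU(χ) = (I ⊗ U(Y_0)) · ∏_{ω=1}^{2^n−1} ∑_c |c⟩⟨c| ⊗ (U(Y_ω) if c·ω = 1, else I), where X_ω = ∑_i (−1)^{ω·i} χ_i, Y_0 = (1/2^n)∑_ω X_ω, and Y_ω = −(2/2^n) X_ω for ω ≠ 0. -/

import Mathlib

open Matrix Kronecker

/-- Mod-2 inner product of the `n`-bit binary expansions of `a` and `b`. -/
def bip (n a b : ℕ) : ℕ :=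
  (∑ j ∈ Finset.range n, (Nat.testBit a j && Nat.testBit b j).toNat) % 2

/-- `(-1)^{a·b}` as an integer sign. -/
def wsign (n a b : ℕ) : ℤ :=
  (-1) ^ (∑ j ∈ Finset.range n, (Nat.testBit a j && Nat.testBit b j).toNat)

/- ### Auxiliary lemmas about `wsign` -/

lemma wsign_comm (n a b : ℕ) : wsign n a b = wsign n b a := by
  simp [wsign, Bool.and_comm]

lemma wsign_zero_right (n a : ℕ) : wsign n a 0 = 1 := by
  simp [wsign]

lemma wsign_prod (n a b : ℕ) :
    wsign n a b = ∏ j ∈ Finset.range n, (-1 : ℤ) ^ (Nat.testBit a j && Nat.testBit b j).toNat := by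
  rw [wsign, ← Finset.prod_pow_eq_pow_sum]

lemma wsign_mul (n a b c : ℕ) : wsign n a c * wsign n b c = wsign n (a ^^^ b) c := by
  rw [wsign_prod, wsign_prod, wsign_prod, ← Finset.prod_mul_distrib]
  refine Finset.prod_congr rfl fun j _ => ?_
  rw [Nat.testBit_xor]
  cases ha : a.testBit j <;> cases hb : b.testBit j <;> cases hc : c.testBit j <;> decide

lemma wsign_eq_ite (n a b : ℕ) :
    wsign n a b = if bip n a b = 1 then (-1 : ℤ) else 1 := by
  rw [wsign, neg_one_pow_eq_pow_mod_two]
  rcases Nat.mod_two_eq_zero_or_one (∑ j ∈ Finset.range n, (Nat.testBit a j && Nat.testBit b j).toNat) with h | h <;>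
    simp [bip, h]

lemma wsign_succ_low (n d ω : ℕ) (hω : ω < 2 ^ n) :
    wsign (n + 1) d ω = wsign n (d % 2 ^ n) ω := by
  unfold wsign
  rw [Finset.sum_range_succ, Nat.testBit_lt_two_pow hω]
  simp only [Bool.and_false, Bool.toNat_false, add_zero]
  congr 1
  refine Finset.sum_congr rfl fun j hj => ?_
  rw [Nat.testBit_mod_two_pow]
  simp [Finset.mem_range.mp hj]

lemma wsign_succ_high (n d ω : ℕ) (hω : ω < 2 ^ n) :
    wsign (n + 1) d (2 ^ n + ω) = (-1 : ℤ) ^ (d.testBit n).toNat * wsign n (d % 2 ^ n) ω := by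
  unfold wsign
  rw [Finset.sum_range_succ]
  have h1 : Nat.testBit (2 ^ n + ω) n = true := by
    rw [Nat.testBit_two_pow_add_eq, Nat.testBit_lt_two_pow hω]
    rfl
  rw [h1]
  have h2 : ∀ j ∈ Finset.range n,
      (Nat.testBit d j && Nat.testBit (2 ^ n + ω) j).toNat
        = (Nat.testBit (d % 2 ^ n) j && Nat.testBit ω j).toNat := by
    intro j hj
    rw [Nat.testBit_two_pow_add_gt (Finset.mem_range.mp hj), Nat.testBit_mod_two_pow]
    simp [Finset.mem_range.mp hj]
  rw [Finset.sum_congr rfl h2, pow_add, mul_comm]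
  simp

/-- Walsh orthogonality: `∑_{ω<2^n} (-1)^{d·ω} = 2^n` if `d = 0` and `0` otherwise. -/
lemma walsh : ∀ n : ℕ, ∀ d : ℕ, d < 2 ^ n →
    (∑ ω ∈ Finset.range (2 ^ n), wsign n d ω) = if d = 0 then ((2 : ℤ) ^ n) else 0
  | 0, d, hd => by
    have hd0 : d = 0 := by simpa using Nat.lt_one_iff.mp (by simpa using hd)
    subst hd0
    simp [wsign]
  | n + 1, d, hd => by
    have hpos : 0 < 2 ^ n := Nat.pow_pos (by norm_num)
    have hmod : d % 2 ^ n < 2 ^ n := Nat.mod_lt _ hpos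
    have IH := walsh n (d % 2 ^ n) hmod
    have hsplit : (2 : ℕ) ^ (n + 1) = 2 ^ n + 2 ^ n := by ring
    rw [hsplit, Finset.sum_range_add]
    have e1 : (∑ ω ∈ Finset.range (2 ^ n), wsign (n + 1) d ω)
        = if d % 2 ^ n = 0 then ((2 : ℤ) ^ n) else 0 := by
      rw [← IH]
      exact Finset.sum_congr rfl fun ω hω => wsign_succ_low n d ω (Finset.mem_range.mp hω)
    have e2 : (∑ ω ∈ Finset.range (2 ^ n), wsign (n + 1) d (2 ^ n + ω))
        = (-1 : ℤ) ^ (d.testBit n).toNat * (if d % 2 ^ n = 0 then ((2 : ℤ) ^ n) else 0) := by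
      rw [← IH, Finset.mul_sum]
      exact Finset.sum_congr rfl fun ω hω => wsign_succ_high n d ω (Finset.mem_range.mp hω)
    rw [e1, e2]
    by_cases h0 : d = 0
    · subst h0
      simp [pow_succ]
      ring
    · by_cases hb : d.testBit n = true
      · rw [hb]
        simp only [Bool.toNat_true, pow_one, if_neg h0]
        split_ifs <;> ring
      · have hb' : d.testBit n = false := by simpa using hb
        have hdiv : d / 2 ^ n < 2 := by
          apply Nat.div_lt_of_lt_mul
          calc d < 2 ^ (n + 1) := hd
          _ = 2 ^ n * 2 := by ring
        have hbit := Nat.testBit_eq_decide_div_mod_eq (x := d) (i := n)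
        rw [hb'] at hbit
        have hne1 : d / 2 ^ n % 2 ≠ 1 := by
          intro h
          rw [h] at hbit
          simp at hbit
        have hq2 : d / 2 ^ n % 2 = d / 2 ^ n := Nat.mod_eq_of_lt hdiv
        rw [hq2] at hne1
        have hq0 : d / 2 ^ n = 0 := by omega
        have hdm : d % 2 ^ n = d := by
          have h := Nat.div_add_mod d (2 ^ n)
          rw [hq0] at h
          simpa using h
        rw [hdm]
        simp [h0, hb']

lemma walsh_fin {n : ℕ} (c i : Fin (2 ^ n)) :
    (∑ ω : Fin (2 ^ n), wsign n (c : ℕ) (ω : ℕ) * wsign n (ω : ℕ) (i : ℕ))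
      = if c = i then ((2 : ℤ) ^ n) else 0 := by
  have h : ∀ ω : ℕ, wsign n (c : ℕ) ω * wsign n ω (i : ℕ)
      = wsign n ((c : ℕ) ^^^ (i : ℕ)) ω := by
    intro ω
    rw [wsign_comm n ω (i : ℕ)]
    exact wsign_mul n (c : ℕ) (i : ℕ) ω
  simp_rw [h]
  rw [Fin.sum_univ_eq_sum_range (fun ω => wsign n ((c : ℕ) ^^^ (i : ℕ)) ω)]
  rw [walsh n _ (Nat.xor_lt_two_pow c.isLt i.isLt)]
  by_cases hc : c = i
  · subst hc
    simp
  · have hxor : (c : ℕ) ^^^ (i : ℕ) ≠ 0 := fun h' => hc (Fin.ext (by have := congrArg (· ^^^ (i : ℕ)) h'; simpa [Nat.xor_assoc] using this))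
    simp [hxor, hc]

/- ### List helpers -/

lemma sum_map_filter {α M : Type*} [AddCommMonoid M] (p : α → Bool) (g : α → M) :
    ∀ l : List α, ((l.filter p).map g).sum = (l.map fun a => if p a then g a else 0).sum
  | [] => rfl
  | a :: l => by
    rw [List.filter_cons]
    by_cases h : p a <;> simp [h, sum_map_filter p g l]

/- ### Key identity in the divisible group `D` -/

lemma keyD {D : Type*} [AddCommGroup D] [Module ℚ D] {n : ℕ}
    (χ X Y : Fin (2 ^ n) → D)
    (hX : ∀ ω : Fin (2 ^ n), X ω = ∑ i : Fin (2 ^ n), wsign n (ω : ℕ) (i : ℕ) • χ i)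
    (hY0 : Y 0 = ((2 ^ n : ℚ)⁻¹) • ∑ ω : Fin (2 ^ n), X ω)
    (hY : ∀ ω : Fin (2 ^ n), ω ≠ 0 → Y ω = (-(2 / 2 ^ n : ℚ)) • X ω)
    (c : Fin (2 ^ n)) :
    Y 0 + (((List.finRange (2 ^ n)).filter (fun ω => ω ≠ 0)).map
      (fun ω : Fin (2 ^ n) => if bip n (c : ℕ) (ω : ℕ) = 1 then Y ω else 0)).sum = χ c := by
  have h2n : ((2 : ℚ) ^ n) ≠ 0 := by positivity
  rw [sum_map_filter, ← Fin.sum_univ_def]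
  have hterm : ∀ ω : Fin (2 ^ n),
      (if (fun ω : Fin (2 ^ n) => decide (ω ≠ 0)) ω then
          (if bip n (c : ℕ) (ω : ℕ) = 1 then Y ω else 0) else 0)
        = (((2 ^ n : ℚ)⁻¹ * ((wsign n (c : ℕ) (ω : ℕ) : ℤ) : ℚ)) - (2 ^ n : ℚ)⁻¹) • X ω := by
    intro ω
    simp only [decide_eq_true_eq]
    by_cases hω : ω = 0
    · subst hω
      simp [wsign_zero_right]
    · rw [if_pos hω, hY ω hω, wsign_eq_ite]
      by_cases hb : bip n (c : ℕ) ((ω : Fin (2 ^ n)) : ℕ) = 1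
      · rw [if_pos hb, if_pos hb]
        congr 1
        push_cast
        field_simp
        ring
      · rw [if_neg hb, if_neg hb]
        simp
  rw [Finset.sum_congr rfl fun ω _ => hterm ω, hY0, Finset.smul_sum,
    ← Finset.sum_add_distrib]
  have hcomb : ∀ ω : Fin (2 ^ n),
      (2 ^ n : ℚ)⁻¹ • X ω
        + (((2 ^ n : ℚ)⁻¹ * ((wsign n (c : ℕ) (ω : ℕ) : ℤ) : ℚ)) - (2 ^ n : ℚ)⁻¹) • X ω
      = ((2 ^ n : ℚ)⁻¹ * ((wsign n (c : ℕ) (ω : ℕ) : ℤ) : ℚ)) • X ω := by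
    intro ω
    rw [← add_smul]
    congr 1
    ring
  rw [Finset.sum_congr rfl fun ω _ => hcomb ω]
  have hXsub : ∀ ω : Fin (2 ^ n),
      ((2 ^ n : ℚ)⁻¹ * ((wsign n (c : ℕ) (ω : ℕ) : ℤ) : ℚ)) • X ω
        = ∑ i : Fin (2 ^ n),
            ((2 ^ n : ℚ)⁻¹ * ((wsign n (c : ℕ) (ω : ℕ) : ℤ) : ℚ)
              * ((wsign n (ω : ℕ) (i : ℕ) : ℤ) : ℚ)) • χ i := by
    intro ω
    rw [hX ω, Finset.smul_sum]
    refine Finset.sum_congr rfl fun i _ => ?_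
    rw [← Int.cast_smul_eq_zsmul ℚ, smul_smul]
  rw [Finset.sum_congr rfl fun ω _ => hXsub ω, Finset.sum_comm]
  have hinner : ∀ i : Fin (2 ^ n),
      (∑ ω : Fin (2 ^ n),
        ((2 ^ n : ℚ)⁻¹ * ((wsign n (c : ℕ) (ω : ℕ) : ℤ) : ℚ)
          * ((wsign n (ω : ℕ) (i : ℕ) : ℤ) : ℚ)) • χ i)
      = (if c = i then (1 : ℚ) else 0) • χ i := by
    intro i
    rw [← Finset.sum_smul]
    congr 1
    have : (∑ ω : Fin (2 ^ n),
        (2 ^ n : ℚ)⁻¹ * ((wsign n (c : ℕ) (ω : ℕ) : ℤ) : ℚ)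
          * ((wsign n (ω : ℕ) (i : ℕ) : ℤ) : ℚ))
        = (2 ^ n : ℚ)⁻¹ * ((∑ ω : Fin (2 ^ n),
            wsign n (c : ℕ) (ω : ℕ) * wsign n (ω : ℕ) (i : ℕ) : ℤ) : ℚ) := by
      push_cast
      rw [Finset.mul_sum]
      refine Finset.sum_congr rfl fun ω _ => by ring
    rw [this, walsh_fin c i]
    by_cases hci : c = i
    · simp [hci, h2n]
    · simp [hci]
  rw [Finset.sum_congr rfl fun i _ => hinner i]
  simp [Finset.sum_ite_eq]

/- ### Matrix block lemmas -/

lemma one_kron {N m : ℕ} (M : Matrix (Fin m) (Fin m) ℂ) :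
    (1 : Matrix (Fin N) (Fin N) ℂ) ⊗ₖ M
      = ∑ c : Fin N, Matrix.single c c (1 : ℂ) ⊗ₖ M := by
  have h1 : (1 : Matrix (Fin N) (Fin N) ℂ) = ∑ c : Fin N, Matrix.single c c (1 : ℂ) := by
    ext i j
    simp only [Finset.sum_apply, Matrix.sum_apply, Matrix.single, Matrix.one_apply,
      Matrix.of_apply]
    by_cases hij : i = j
    · subst hij
      simp
    · simp [hij, fun c => show ¬(c = i ∧ c = j) from fun ⟨h1, h2⟩ => hij (h1 ▸ h2 ▸ rfl)]
  rw [h1]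
  ext ⟨i, i'⟩ ⟨j, j'⟩
  simp [Matrix.kroneckerMap_apply, Matrix.sum_apply, Finset.sum_mul]

lemma kron_sum_mul_kron_sum {N m : ℕ} (A B : Fin N → Matrix (Fin m) (Fin m) ℂ) :
    ((∑ c : Fin N, Matrix.single c c (1 : ℂ) ⊗ₖ A c) *
        (∑ c : Fin N, Matrix.single c c (1 : ℂ) ⊗ₖ B c))
      = ∑ c : Fin N, Matrix.single c c (1 : ℂ) ⊗ₖ (A c * B c) := by
  rw [Finset.sum_mul_sum]
  refine Finset.sum_congr rfl fun c _ => ?_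
  have hstep : ∀ d : Fin N,
      (Matrix.single c c (1 : ℂ) ⊗ₖ A c) * (Matrix.single d d (1 : ℂ) ⊗ₖ B d)
        = if d = c then Matrix.single c c (1 : ℂ) ⊗ₖ (A c * B d) else 0 := by
    intro d
    rw [← Matrix.mul_kronecker_mul]
    by_cases hdc : d = c
    · subst hdc
      rw [if_pos rfl, Matrix.single_mul_single_same, one_mul]
    · rw [if_neg hdc, Matrix.single_mul_single_of_ne (h := Ne.symm hdc),
        Matrix.zero_kronecker]
  rw [Finset.sum_congr rfl fun d _ => hstep d]
  simp

lemma prod_blocks {N m : ℕ} {α : Type*} (F : α → Fin N → Matrix (Fin m) (Fin m) ℂ) :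
    ∀ l : List α,
      (l.map fun a => ∑ c : Fin N, Matrix.single c c (1 : ℂ) ⊗ₖ F a c).prod
        = ∑ c : Fin N, Matrix.single c c (1 : ℂ) ⊗ₖ (l.map fun a => F a c).prod
  | [] => by
    simp only [List.map_nil, List.prod_nil]
    rw [← one_kron, Matrix.one_kronecker_one]
  | a :: l => by
    rw [List.map_cons, List.prod_cons, prod_blocks F l, kron_sum_mul_kron_sum]
    simp

/- ### The main theorem -/

/-- frequency-domain factorization of a uniformly controlled gate:
`LU(χ) = (I ⊗ U(Y_0)) · ∏_{ω=1}^{2^n−1} ∑_c |c⟩⟨c| ⊗ (U(Y_ω) if c·ω = 1 else I)`,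
where `X_ω = ∑_i (−1)^{ω·i} χ_i`, `Y_0 = (1/2^n) ∑_ω X_ω`, and
`Y_ω = −(2/2^n) X_ω` for `ω ≠ 0` (factors taken in increasing order of `ω`;
they all commute). -/
theorem stmt9 {D : Type*} [AddCommGroup D] [Module ℚ D] {n m : ℕ}
    (U : D → Matrix (Fin m) (Fin m) ℂ)
    (hUmem : ∀ a : D, U a ∈ Matrix.unitaryGroup (Fin m) ℂ)
    (hUhom : ∀ a b : D, U (a + b) = U a * U b)
    (χ X Y : Fin (2 ^ n) → D)
    (hX : ∀ ω : Fin (2 ^ n), X ω = ∑ i : Fin (2 ^ n), wsign n (ω : ℕ) (i : ℕ) • χ i)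
    (hY0 : Y 0 = ((2 ^ n : ℚ)⁻¹) • ∑ ω : Fin (2 ^ n), X ω)
    (hY : ∀ ω : Fin (2 ^ n), ω ≠ 0 → Y ω = (-(2 / 2 ^ n : ℚ)) • X ω) :
    (∑ c : Fin (2 ^ n), (Matrix.single c c (1 : ℂ)) ⊗ₖ U (χ c)) =
      ((1 : Matrix (Fin (2 ^ n)) (Fin (2 ^ n)) ℂ) ⊗ₖ U (Y 0)) *
        (((List.finRange (2 ^ n)).filter (fun ω => ω ≠ 0)).map
          (fun ω : Fin (2 ^ n) =>
            ∑ c : Fin (2 ^ n), (Matrix.single c c (1 : ℂ)) ⊗ₖ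
              (if bip n (c : ℕ) (ω : ℕ) = 1 then U (Y ω)
               else (1 : Matrix (Fin m) (Fin m) ℂ)))).prod := by
  -- `U 0 = 1`
  have hU0 : U 0 = 1 := by
    have h := hUhom 0 0
    rw [add_zero] at h
    have hu := (Matrix.mem_unitaryGroup_iff'.mp (hUmem 0))
    calc U 0 = 1 * U 0 := (one_mul _).symm
      _ = (star (U 0) * U 0) * U 0 := by rw [hu]
      _ = star (U 0) * (U 0 * U 0) := by rw [mul_assoc]
      _ = star (U 0) * U 0 := by rw [← h]
      _ = 1 := hu
  -- products of `U`'s are `U` of sums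
  have hlist : ∀ (g : Fin (2 ^ n) → D) (l : List (Fin (2 ^ n))),
      (l.map fun a => U (g a)).prod = U (l.map g).sum := by
    intro g l
    induction l with
    | nil => simpa using hU0.symm
    | cons a l ih => rw [List.map_cons, List.prod_cons, ih, List.map_cons, List.sum_cons, hUhom]
  set L : List (Fin (2 ^ n)) := (List.finRange (2 ^ n)).filter (fun ω => ω ≠ 0) with hL
  rw [prod_blocks (fun (ω : Fin (2 ^ n)) (c : Fin (2 ^ n)) =>
      if bip n (c : ℕ) (ω : ℕ) = 1 then U (Y ω) else (1 : Matrix (Fin m) (Fin m) ℂ)) L,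
    one_kron, kron_sum_mul_kron_sum]
  refine Finset.sum_congr rfl fun c _ => ?_
  have hfac : ∀ ω : Fin (2 ^ n),
      (if bip n (c : ℕ) (ω : ℕ) = 1 then U (Y ω) else (1 : Matrix (Fin m) (Fin m) ℂ))
        = U (if bip n (c : ℕ) (ω : ℕ) = 1 then Y ω else 0) := by
    intro ω
    split_ifs with h
    · rfl
    · rw [hU0]
  have hc : U (χ c) = U (Y 0) * (L.map fun ω : Fin (2 ^ n) =>
      if bip n (c : ℕ) (ω : ℕ) = 1 then U (Y ω) else (1 : Matrix (Fin m) (Fin m) ℂ)).prod := by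
    rw [show (L.map fun ω : Fin (2 ^ n) =>
          if bip n (c : ℕ) (ω : ℕ) = 1 then U (Y ω) else (1 : Matrix (Fin m) (Fin m) ℂ))
        = (L.map fun ω : Fin (2 ^ n) =>
            U (if bip n (c : ℕ) (ω : ℕ) = 1 then Y ω else 0)) from
      List.map_congr_left fun ω _ => hfac ω]
    rw [hlist (fun ω : Fin (2 ^ n) => if bip n (c : ℕ) (ω : ℕ) = 1 then Y ω else 0) L,
      ← hUhom, keyD χ X Y hX hY0 hY c]
  rw [hc]
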